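/- In a 2-dimensional C-WMMG with A_1(N) ∩ A_2(N) = ∅, let p_i ∈ M and E ⊆ E_{1i}, and suppose C = C_{1i} ∪ E is winning with p_i ∈ A_2(C). Then every player of A_1(N) ∪ D_{1i} is swing in C, and every player of E is null in C. -/

import Mathlib

/-- Competitive power of a coalition in a 2-dimensional C-WMMG with weights `w1, w2`. -/
def q {P : Type*} [DecidableEq P] (w1 w2 : P → ℕ) (C : Finset P) : ℕ :=
  C.sup w1 + C.sup w2

/-- A coalition is winning iff its power exceeds that of its complement. -/
def Winning {P : Type*} [Fintype P] [DecidableEq P] (w1 w2 : P → ℕ) (C : Finset P) : Prop :=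
  q w1 w2 Cᶜ < q w1 w2 C

/-- A minimal winning coalition: winning, and every proper subset is losing. -/
def MWC {P : Type*} [Fintype P] [DecidableEq P] (w1 w2 : P → ℕ) (C : Finset P) : Prop :=
  Winning w1 w2 C ∧ ∀ D ⊂ C, ¬ Winning w1 w2 D

/-- `Aset w C` is the set of members of `C` whose `w`-weight attains the maximum over `C`. -/
def Aset {P : Type*} [DecidableEq P] (w : P → ℕ) (C : Finset P) : Finset P :=
  C.filter (fun j => w j = C.sup w)

/-- `B C = A_1(C) ∪ A_2(C)`: the busy players of `C`. -/
def Bset {P : Type*} [DecidableEq P] (w1 w2 : P → ℕ) (C : Finset P) : Finset P :=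
  Aset w1 C ∪ Aset w2 C

/-- `M = N ∖ B(N)`: the players idle in the grand coalition. -/
def Mset {P : Type*} [Fintype P] [DecidableEq P] (w1 w2 : P → ℕ) : Finset P :=
  Finset.univ \ Bset w1 w2 Finset.univ

/-- `D_{1i} = {p_t ∈ M : p_t^1 + q_2(N) ≥ p_i^2 + q_1(N)}`. -/
def D1 {P : Type*} [Fintype P] [DecidableEq P] (w1 w2 : P → ℕ) (i : P) : Finset P :=
  (Mset w1 w2).filter
    (fun t => w2 i + (Finset.univ : Finset P).sup w1 ≤ w1 t + (Finset.univ : Finset P).sup w2)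

/-- `C_{1i} = A_1(N) ∪ {p_i} ∪ D_{1i}`. -/
def C1 {P : Type*} [Fintype P] [DecidableEq P] (w1 w2 : P → ℕ) (i : P) : Finset P :=
  insert i (Aset w1 Finset.univ ∪ D1 w1 w2 i)

/-- A player `j` is swing in a coalition `C` if `j ∈ C` and `C ∖ {j}` is losing. -/
def Swing {P : Type*} [Fintype P] [DecidableEq P] (w1 w2 : P → ℕ) (j : P) (C : Finset P) : Prop :=
  j ∈ C ∧ ¬ Winning w1 w2 (C.erase j)

/-- `E_{1i} = {p_j ∈ M ∖ C_{1i} : p_j^2 ≤ p_i^2}`. -/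
def E1 {P : Type*} [Fintype P] [DecidableEq P] (w1 w2 : P → ℕ) (i : P) : Finset P :=
  (Mset w1 w2 \ C1 w1 w2 i).filter (fun j => w2 j ≤ w2 i)

/-- `WC1_i = {C ⊆ N : C winning, A_1(C) = A_1(N), p_i ∈ A_2(C)}`. -/
def WC1 {P : Type*} [Fintype P] [DecidableEq P] (w1 w2 : P → ℕ) (i : P) :
    Set (Finset P) :=
  {C | Winning w1 w2 C ∧ Aset w1 C = Aset w1 Finset.univ ∧ i ∈ Aset w2 C}

/-- A player `j` is null in a coalition `C` if `j ∈ C` and `C ∖ {j}` is still winning. -/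
def NullIn {P : Type*} [Fintype P] [DecidableEq P] (w1 w2 : P → ℕ) (j : P) (C : Finset P) :
    Prop :=
  j ∈ C ∧ Winning w1 w2 (C.erase j)

/-- In a 2-dim C-WMMG with `A_1(N) ∩ A_2(N) = ∅`, `p_i ∈ M`, `E ⊆ E_{1i}`, if
`C = C_{1i} ∪ E` is winning with `p_i ∈ A_2(C)`, then every player of
`A_1(N) ∪ D_{1i}` is swing in `C` and every player of `E` is null in `C`. -/
theorem swing_and_null_in_wc1 {P : Type*} [Fintype P] [DecidableEq P]
    (w1 w2 : P → ℕ)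
    (hdisj : Aset w1 Finset.univ ∩ Aset w2 Finset.univ = ∅)
    (i : P) (hi : i ∈ Mset w1 w2)
    (E : Finset P) (hE : E ⊆ E1 w1 w2 i)
    (hwin : Winning w1 w2 (C1 w1 w2 i ∪ E))
    (hbusy : i ∈ Aset w2 (C1 w1 w2 i ∪ E)) :
    (∀ j ∈ Aset w1 Finset.univ ∪ D1 w1 w2 i, Swing w1 w2 j (C1 w1 w2 i ∪ E)) ∧
    (∀ j ∈ E, NullIn w1 w2 j (C1 w1 w2 i ∪ E)) := by
  classical
  set C := C1 w1 w2 i ∪ E with hCdef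
  set Q1 := (Finset.univ : Finset P).sup w1 with hQ1
  set Q2 := (Finset.univ : Finset P).sup w2 with hQ2
  -- facts about i
  simp only [Mset, Bset, Aset, Finset.mem_sdiff, Finset.mem_union, Finset.mem_filter,
    Finset.mem_univ, true_and, not_or] at hi
  obtain ⟨hiA1, hiA2⟩ := hi
  have hiQ2 : w2 i < Q2 := lt_of_le_of_ne (Finset.le_sup (Finset.mem_univ i)) hiA2
  -- i ∈ C
  have hiC : i ∈ C := Finset.mem_union_left _ (Finset.mem_insert_self _ _)
  -- A1(N) ⊆ C
  have hA1C : ∀ a, w1 a = Q1 → a ∈ C := fun a ha =>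
    Finset.mem_union_left _ (Finset.mem_insert_of_mem (Finset.mem_union_left _
      (by simp [Aset, ha]; exact hQ1)))
  -- sup w1 over C is Q1
  have hne : (Finset.univ : Finset P).Nonempty := ⟨i, Finset.mem_univ i⟩
  obtain ⟨a, -, haw⟩ := Finset.exists_mem_eq_sup Finset.univ hne w1
  have hsup1 : C.sup w1 = Q1 := le_antisymm
    (Finset.sup_le fun x _ => Finset.le_sup (Finset.mem_univ x))
    (by rw [hQ1, haw]; exact Finset.le_sup (hA1C a haw.symm))
  -- sup w2 over C is w2 i
  have hsup2 : C.sup w2 = w2 i := by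
    simp only [Aset, Finset.mem_filter] at hbusy
    exact hbusy.2.symm
  -- every member of C has w2 ≠ Q2
  have hCmem : ∀ x ∈ C, w2 x ≠ Q2 := by
    intro x hx
    simp only [hCdef, C1, Finset.mem_union, Finset.mem_insert] at hx
    rcases hx with ((rfl | hx) | hx)
    · exact hiA2
    · rcases hx with hx | hx
      · intro h2
        have : x ∈ Aset w1 Finset.univ ∩ Aset w2 Finset.univ := by
          simp only [Finset.mem_inter]
          exact ⟨hx, by simp [Aset, h2]; exact hQ2⟩
        simp [hdisj] at this
      · simp only [D1, Mset, Bset, Aset, Finset.mem_filter, Finset.mem_sdiff,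
          Finset.mem_union, Finset.mem_univ, true_and, not_or] at hx
        exact hx.1.2
    · have := hE hx
      simp only [E1, Mset, Bset, Aset, Finset.mem_filter, Finset.mem_sdiff,
        Finset.mem_union, Finset.mem_univ, true_and, not_or] at this
      exact this.1.1.2
  -- sup w2 over Cᶜ is Q2
  obtain ⟨b, -, hbw⟩ := Finset.exists_mem_eq_sup Finset.univ hne w2
  have hbC : b ∉ C := fun hb => hCmem b hb hbw.symm
  have hcompl2 : Cᶜ.sup w2 = Q2 := le_antisymm
    (Finset.sup_le fun x _ => Finset.le_sup (Finset.mem_univ x))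
    (by rw [hQ2, hbw]; exact Finset.le_sup (Finset.mem_compl.mpr hbC))
  -- the key winning inequality
  have hkey : Cᶜ.sup w1 + Q2 < Q1 + w2 i := by
    have := hwin
    rw [Winning, q, q, hsup1, hsup2, hcompl2] at this
    exact this
  constructor
  · -- swing part
    intro j hj
    have hjC : j ∈ C := Finset.mem_union_left _ (Finset.mem_insert_of_mem hj)
    refine ⟨hjC, ?_⟩
    rw [Winning, q, q, Finset.compl_erase, not_lt]
    have he1 : (C.erase j).sup w1 ≤ Q1 := hsup1 ▸ Finset.sup_mono (Finset.erase_subset _ _)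
    have he2 : (C.erase j).sup w2 ≤ w2 i := hsup2 ▸ Finset.sup_mono (Finset.erase_subset _ _)
    have hj1 : w1 j ≤ (insert j Cᶜ).sup w1 := Finset.le_sup (Finset.mem_insert_self _ _)
    have hj2 : Q2 ≤ (insert j Cᶜ).sup w2 :=
      hcompl2 ▸ Finset.sup_mono (Finset.subset_insert _ _)
    rcases Finset.mem_union.mp hj with hj' | hj'
    · simp only [Aset, Finset.mem_filter] at hj'
      have : w1 j = Q1 := hj'.2
      omega
    · simp only [D1, Finset.mem_filter] at hj'
      have : w2 i + Q1 ≤ w1 j + Q2 := hj'.2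
      omega
  · -- null part
    intro j hj
    have hjE := hE hj
    have hjC : j ∈ C := Finset.mem_union_right _ hj
    refine ⟨hjC, ?_⟩
    simp only [E1, Finset.mem_filter, Finset.mem_sdiff] at hjE
    obtain ⟨⟨hjM, hjC1⟩, hjw2⟩ := hjE
    have hjMset := hjM
    simp only [Mset, Bset, Aset, Finset.mem_sdiff, Finset.mem_union, Finset.mem_filter,
      Finset.mem_univ, true_and, not_or] at hjMset
    -- j ∉ D1, so w1 j + Q2 < w2 i + Q1
    have hjD1 : ¬ (w2 i + Q1 ≤ w1 j + Q2) := by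
      intro h
      exact hjC1 (by
        simp only [C1, Finset.mem_insert, Finset.mem_union]
        exact Or.inr (Or.inr (by simp only [D1, Finset.mem_filter]; exact ⟨hjM, h⟩)))
    -- j ≠ i
    have hji : j ≠ i := fun h => hjC1 (h ▸ Finset.mem_insert_self _ _)
    -- sup w1 over C.erase j is Q1
    have haj : a ≠ j := fun h => hjMset.1 (h ▸ haw.symm)
    have hsup1' : (C.erase j).sup w1 = Q1 := le_antisymm
      (Finset.sup_le fun x _ => Finset.le_sup (Finset.mem_univ x))
      (by rw [hQ1, haw]; exact Finset.le_sup (Finset.mem_erase.mpr ⟨haj, hA1C a haw.symm⟩))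
    have hsup2' : (C.erase j).sup w2 = w2 i := le_antisymm
      (hsup2 ▸ Finset.sup_mono (Finset.erase_subset _ _))
      (Finset.le_sup (Finset.mem_erase.mpr ⟨hji.symm, hiC⟩))
    rw [Winning, q, q, Finset.compl_erase, hsup1', hsup2']
    have hins1 : (insert j Cᶜ).sup w1 = w1 j ⊔ Cᶜ.sup w1 := Finset.sup_insert
    have hins2 : (insert j Cᶜ).sup w2 = w2 j ⊔ Cᶜ.sup w2 := Finset.sup_insert
    have hjQ2 : w2 j ≤ Q2 := Finset.le_sup (Finset.mem_univ j)
    rw [hins1, hins2, hcompl2]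
    omega
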